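/- For any integer n ≥ 2, the sum over k from 0 to n-1 of ((-n)_k (n-1)_k) / ((1)_k (1/2)_k) equals (-1)^(n-1) (2^(2n-2) - (2^(2n-2) - 1)/(2n-1)). -/
import Mathlib

open Finset

/-- The Pochhammer symbol (rising factorial): (a)_0 = 1, (a)_k = a(a+1)⋯(a+k-1). -/
def poch (a : ℚ) : ℕ → ℚ
  | 0 => 1
  | k + 1 => poch a k * (a + k)

lemma poch_succ (a : ℚ) (k : ℕ) : poch a (k+1) = poch a k * (a + k) := rfl

lemma poch_shift (a : ℚ) (k : ℕ) : a * poch (a+1) k = poch a k * (a + k) := by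
  induction k with
  | zero => simp [poch]
  | succ k ih =>
      rw [poch_succ, poch_succ]
      push_cast
      linear_combination (a + 1 + (k:ℚ)) * ih

lemma poch_pos (a : ℚ) (ha : 0 < a) (k : ℕ) : 0 < poch a k := by
  induction k with
  | zero => norm_num [poch]
  | succ k ih =>
      rw [poch_succ]
      positivity

lemma poch_vanish (n : ℕ) : poch (-(n:ℚ)) (n+1) = 0 := by
  rw [poch_succ]
  simp

/-- the summand -/
def Tt (n k : ℕ) : ℚ :=
  poch (-(n : ℚ)) k * poch ((n : ℚ) - 1) k / (poch 1 k * poch (1/2) k)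

/-- WZ-style certificate -/
def Vv (n k : ℕ) : ℚ :=
  -2*(n:ℚ)*(k:ℚ)*(2*(k:ℚ)-1) * poch (-(n:ℚ)-1) k * poch ((n:ℚ)-1) k /
    (((n:ℚ)-1)*((n:ℚ)+1) * (poch 1 k * poch (1/2) k))

lemma step (n k : ℕ) (hn : 2 ≤ n) :
    (2*(n:ℚ)+1) * Tt (n+1) k + (2*(n:ℚ)-1) * Tt n k = Vv n (k+1) - Vv n k := by
  have hn1 : ((n:ℚ)) - 1 ≠ 0 := by
    have : (2:ℚ) ≤ (n:ℚ) := by exact_mod_cast hn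
    intro h; nlinarith
  have hn2 : ((n:ℚ)) + 1 ≠ 0 := by positivity
  have hu : poch 1 k ≠ 0 := ne_of_gt (poch_pos 1 one_pos k)
  have hv : poch (1/2) k ≠ 0 := ne_of_gt (poch_pos (1/2) (by norm_num) k)
  have hPe : poch (-(n:ℚ)) k = poch (-(n:ℚ)-1) k * ((k:ℚ) - (n:ℚ) - 1) / (-(n:ℚ)-1) := by
    have h := poch_shift (-(n:ℚ)-1) k
    rw [show (-(n:ℚ)-1+1) = -(n:ℚ) by ring] at h
    have hne : -(n:ℚ)-1 ≠ 0 := by intro h2; nlinarith [Nat.cast_nonneg (α := ℚ) n]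
    field_simp
    linear_combination h
  have hQe : poch ((n:ℚ)) k = poch ((n:ℚ)-1) k * ((n:ℚ) - 1 + (k:ℚ)) / ((n:ℚ)-1) := by
    have h := poch_shift ((n:ℚ)-1) k
    rw [show ((n:ℚ)-1+1) = (n:ℚ) by ring] at h
    field_simp
    linear_combination h
  unfold Tt Vv
  rw [poch_succ (-(n:ℚ)-1), poch_succ ((n:ℚ)-1), poch_succ 1, poch_succ (1/2)]
  push_cast
  rw [show (-((n:ℚ)+1)) = -(n:ℚ)-1 by ring, show ((n:ℚ)+1-1) = (n:ℚ) by ring]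
  rw [hPe, hQe]
  have hk1 : ((k:ℚ)) + 1 ≠ 0 := by positivity
  have hk2 : (1:ℚ)/2 + (k:ℚ) ≠ 0 := by positivity
  have hne : -(n:ℚ)-1 ≠ 0 := by intro h2; nlinarith [Nat.cast_nonneg (α := ℚ) n]
  field_simp
  ring

lemma telescope (n : ℕ) (hn : 2 ≤ n) (m : ℕ) :
    ∑ k ∈ range m, ((2*(n:ℚ)+1) * Tt (n+1) k + (2*(n:ℚ)-1) * Tt n k) = Vv n m := by
  induction m with
  | zero => simp [Vv]
  | succ m ih =>
      rw [sum_range_succ, ih, step n m hn]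
      ring

lemma Vv_top (n : ℕ) : Vv n (n+2) = 0 := by
  have h := poch_vanish (n+1)
  push_cast at h
  rw [show (-((n:ℚ)+1)) = -(n:ℚ)-1 by ring] at h
  unfold Vv
  rw [show (n+1+1 : ℕ) = n+2 from rfl] at h
  rw [h]
  ring

lemma recurrence (n : ℕ) (hn : 2 ≤ n) :
    (2*(n:ℚ)+1) * (∑ k ∈ range (n+2), Tt (n+1) k)
      + (2*(n:ℚ)-1) * (∑ k ∈ range (n+1), Tt n k) = 0 := by
  have h := telescope n hn (n+2)
  rw [Vv_top] at h
  rw [Finset.sum_add_distrib, ← Finset.mul_sum, ← Finset.mul_sum] at h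
  have hz : Tt n (n+1) = 0 := by
    unfold Tt
    rw [poch_vanish]
    simp
  have h2 : ∑ k ∈ range (n+2), Tt n k = ∑ k ∈ range (n+1), Tt n k := by
    rw [sum_range_succ, hz, add_zero]
  rw [h2] at h
  exact h

lemma Gsum (m : ℕ) :
    ∑ k ∈ range (m+3), Tt (m+2) k = (-1)^(m+1) / (2*((m:ℚ)+2)-1) := by
  induction m with
  | zero =>
      norm_num [Finset.sum_range_succ, Tt, poch]
  | succ m ih =>
      have h := recurrence (m+2) (by omega)
      rw [show (m+2+1 : ℕ) = m+3 from rfl] at h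
      rw [ih] at h
      rw [show (m+2+2 : ℕ) = m+4 from rfl] at h
      rw [show (m+1+3 : ℕ) = m+4 from rfl, show (m+1+2 : ℕ) = m+3 from rfl]
      push_cast at h ⊢
      have hne2 : 2*((m:ℚ)+2)-1 ≠ 0 := by nlinarith [Nat.cast_nonneg (α := ℚ) m]
      have hne3 : 2*((m:ℚ)+1+2)-1 ≠ 0 := by nlinarith [Nat.cast_nonneg (α := ℚ) m]
      field_simp at h
      rw [eq_div_iff hne3]
      linear_combination h

lemma Tt_succ_diag (n : ℕ) (hn : 2 ≤ n) :
    Tt (n+1) (n+1) = Tt n n * (-(4*(n:ℚ)*(2*(n:ℚ)-1)) / (((n:ℚ)-1)*(2*(n:ℚ)+1))) := by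
  have hn1 : ((n:ℚ)) - 1 ≠ 0 := by
    have : (2:ℚ) ≤ (n:ℚ) := by exact_mod_cast hn
    intro h; nlinarith
  have hu : poch 1 n ≠ 0 := ne_of_gt (poch_pos 1 one_pos n)
  have hv : poch (1/2) n ≠ 0 := ne_of_gt (poch_pos (1/2) (by norm_num) n)
  have hne : -(n:ℚ)-1 ≠ 0 := by intro h2; nlinarith [Nat.cast_nonneg (α := ℚ) n]
  have hA : poch (-(n:ℚ)-1) n = ((n:ℚ)+1) * poch (-(n:ℚ)) n := by
    have h := poch_shift (-(n:ℚ)-1) n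
    rw [show (-(n:ℚ)-1+1) = -(n:ℚ) by ring] at h
    linear_combination h
  have hB : poch ((n:ℚ)) n = poch ((n:ℚ)-1) n * (2*(n:ℚ)-1)/((n:ℚ)-1) := by
    have h := poch_shift ((n:ℚ)-1) n
    rw [show ((n:ℚ)-1+1) = (n:ℚ) by ring] at h
    field_simp
    linear_combination h
  unfold Tt
  push_cast
  rw [show (-((n:ℚ)+1)) = -(n:ℚ)-1 by ring, show ((n:ℚ)+1-1) = (n:ℚ) by ring]
  rw [poch_succ (-(n:ℚ)-1) n, poch_succ ((n:ℚ)) n, poch_succ 1 n, poch_succ (1/2) n]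
  rw [hA, hB]
  have hk1 : ((n:ℚ)) + 1 ≠ 0 := by positivity
  have hk2 : (1:ℚ)/2 + (n:ℚ) ≠ 0 := by positivity
  field_simp
  ring

lemma Tnn (m : ℕ) :
    Tt (m+2) (m+2) = (-1)^m * 2 * 4^(m+1) * ((m:ℚ)+1) / (2*((m:ℚ)+2)-1) := by
  induction m with
  | zero => norm_num [Tt, poch]
  | succ m ih =>
      rw [show (m+1+2 : ℕ) = m+2+1 from rfl]
      rw [Tt_succ_diag (m+2) (by omega), ih]
      push_cast
      have hne1 : ((m:ℚ)+2) - 1 ≠ 0 := by nlinarith [Nat.cast_nonneg (α := ℚ) m]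
      have hne2 : 2*((m:ℚ)+2)-1 ≠ 0 := by nlinarith [Nat.cast_nonneg (α := ℚ) m]
      have hne3 : 2*((m:ℚ)+2)+1 ≠ 0 := by positivity
      have hne4 : 2*((m:ℚ)+1+2)-1 ≠ 0 := by nlinarith [Nat.cast_nonneg (α := ℚ) m]
      field_simp
      ring

theorem stmt2 (n : ℕ) (hn : 2 ≤ n) :
    ∑ k ∈ Finset.range n,
      poch (-(n : ℚ)) k * poch ((n : ℚ) - 1) k / (poch 1 k * poch (1/2) k)
    = (-1) ^ (n - 1) *
        ((2 : ℚ) ^ (2 * n - 2) - ((2 : ℚ) ^ (2 * n - 2) - 1) / (2 * (n : ℚ) - 1)) := by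
  obtain ⟨m, rfl⟩ : ∃ m, n = m + 2 := ⟨n - 2, by omega⟩
  show (∑ k ∈ Finset.range (m+2), Tt (m+2) k) = _
  have hsum : ∑ k ∈ range (m+2), Tt (m+2) k
      = (∑ k ∈ range (m+2+1), Tt (m+2) k) - Tt (m+2) (m+2) :=
    eq_sub_of_add_eq (sum_range_succ _ _).symm
  rw [hsum, show (m+2+1:ℕ) = m+3 from rfl, Gsum, Tnn]
  have e1 : (m+2) - 1 = m+1 := by omega
  have e2 : 2*(m+2) - 2 = 2*m+2 := by omega
  rw [e1, e2]
  have h4 : (4:ℚ)^(m+1) = 2^(2*m+2) := by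
    rw [show (4:ℚ) = 2^2 by norm_num, ← pow_mul]
    ring_nf
  rw [h4]
  push_cast
  have hne : 2*((m:ℚ)+2)-1 ≠ 0 := by nlinarith [Nat.cast_nonneg (α := ℚ) m]
  field_simp
  ring
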